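/- Let (Λ, δ) be a population protocol with output state y and let (o_n)_{n∈ℕ} be an infinite nondecreasing sequence of stable configurations with Δ = bdd((o_n)) and Γ = Λ ∖ Δ. Then every configuration v ∈ ℕ^Λ such that the restriction of v to Δ is componentwise at most the restriction of o_n to Δ for some n ∈ ℕ is stable. In particular, every configuration v ∈ ℕ^Γ (i.e., with v(s) = 0 for all s ∈ Δ) is stable. -/
import Mathlib


/-! Basic definitions for (leaderless) population protocols:
configurations, transitions, paths, reachability, bottlenecks, stability. -/

namespace PP

variable {Λ : Type*}

open Classical in
/-- The configuration consisting of a single agent in state `s`. -/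
noncomputable def single (s : Λ) : Λ → ℕ := fun t => if t = s then 1 else 0

/-- The configuration consisting of the two agents of the ordered pair `r`. -/
noncomputable def pairConf (r : Λ × Λ) : Λ → ℕ := single r.1 + single r.2

/-- The transition with input pair `r` is applicable to configuration `c`. -/
def Applicable (c : Λ → ℕ) (r : Λ × Λ) : Prop := pairConf r ≤ c

/-- The result of applying the transition with inputs `r` (and outputs `δ r`) to `c`. -/
noncomputable def applyTx (δ : Λ × Λ → Λ × Λ) (r : Λ × Λ) (c : Λ → ℕ) : Λ → ℕ :=
  c - pairConf r + pairConf (δ r)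

/-- `PathFrom δ c p c'`: executing the transition sequence `p` (each transition given
by its ordered pair of input states) from `c` is valid and ends in `c'`. -/
inductive PathFrom (δ : Λ × Λ → Λ × Λ) : (Λ → ℕ) → List (Λ × Λ) → (Λ → ℕ) → Prop
  | nil (c : Λ → ℕ) : PathFrom δ c [] c
  | cons {c c' : Λ → ℕ} (r : Λ × Λ) {p : List (Λ × Λ)} :
      Applicable c r → PathFrom δ (applyTx δ r c) p c' → PathFrom δ c (r :: p) c'

/-- `Reach δ c c'` means `c ⟹ c'`: some finite path leads from `c` to `c'`. -/
def Reach (δ : Λ × Λ → Λ × Λ) (c c' : Λ → ℕ) : Prop := ∃ p, PathFrom δ c p c'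

/-- `NoBottleneck δ b c p`: no transition of path `p` executed from `c` is a
`b`-bottleneck for the configuration to which it is applied. -/
inductive NoBottleneck (δ : Λ × Λ → Λ × Λ) (b : ℕ) : (Λ → ℕ) → List (Λ × Λ) → Prop
  | nil (c : Λ → ℕ) : NoBottleneck δ b c []
  | cons {c : Λ → ℕ} (r : Λ × Λ) {p : List (Λ × Λ)} :
      ¬(c r.1 ≤ b ∧ c r.2 ≤ b) → NoBottleneck δ b (applyTx δ r c) p →
      NoBottleneck δ b c (r :: p)

/-- A configuration is stable w.r.t. output state `y` if the count of `y` can never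
change again. -/
def Stable (δ : Λ × Λ → Λ × Λ) (y : Λ) (o : Λ → ℕ) : Prop :=
  ∀ o', Reach δ o o' → o' y = o y

/-- The transition function is symmetric. -/
def Symmetric (δ : Λ × Λ → Λ × Λ) : Prop :=
  ∀ r1 r2 : Λ, δ (r2, r1) = ((δ (r1, r2)).2, (δ (r1, r2)).1)

end PP


private lemma PP.shift {Λ : Type*} {δ : Λ × Λ → Λ × Λ} (e : Λ → ℕ) :
    ∀ {c c' : Λ → ℕ} {p : List (Λ × Λ)}, PP.PathFrom δ c p c' →
      PP.PathFrom δ (c + e) p (c' + e) := by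
  intro c c' p h
  induction h with
  | nil c => exact .nil _
  | @cons c c' r p happ _ ih =>
      refine .cons r (le_trans happ (fun s => Nat.le_add_right _ _)) ?_
      have heq : PP.applyTx δ r (c + e) = PP.applyTx δ r c + e := by
        funext s
        have h1 : PP.pairConf r s ≤ c s := happ s
        simp only [PP.applyTx, Pi.add_apply, Pi.sub_apply]
        omega
      rw [heq]; exact ih

/-- If `(o_n)` is an infinite nondecreasing sequence of stable configurations and
`Δ = bdd((o_n))`, then every configuration `v` whose restriction to `Δ` is at most
that of some `o_n` is stable; in particular every `v ∈ ℕ^Γ` (zero on `Δ`) is stable. -/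
theorem stmt5 {Λ : Type*} [Fintype Λ] (δ : Λ × Λ → Λ × Λ) (y : Λ)
    (o : ℕ → Λ → ℕ) (hmono : Monotone o) (hst : ∀ n, PP.Stable δ y (o n))
    (Δ : Set Λ) (hΔ : ∀ s : Λ, s ∈ Δ ↔ ∃ B : ℕ, ∀ n, o n s < B) :
    (∀ v : Λ → ℕ, (∃ n, ∀ s ∈ Δ, v s ≤ o n s) → PP.Stable δ y v) ∧
    (∀ v : Λ → ℕ, (∀ s ∈ Δ, v s = 0) → PP.Stable δ y v) := by
  have main : ∀ v : Λ → ℕ, (∃ n, ∀ s ∈ Δ, v s ≤ o n s) → PP.Stable δ y v := by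
    rintro v ⟨n, hv⟩ v' ⟨p, hp⟩
    have hΓ : ∀ s : Λ, s ∉ Δ → ∃ m, v s ≤ o m s := by
      intro s hs
      have h2 : ¬ ∃ B : ℕ, ∀ n, o n s < B := fun h => hs ((hΔ s).mpr h)
      push_neg at h2
      obtain ⟨m, hm⟩ := h2 (v s)
      exact ⟨m, hm⟩
    classical
    set N : Λ → ℕ := fun s => if h : s ∈ Δ then n else (hΓ s h).choose with hN
    set m : ℕ := max n (Finset.univ.sup N) with hmdef
    have hle : v ≤ o m := by
      intro s
      by_cases hs : s ∈ Δ
      · exact le_trans (hv s hs) (hmono (le_max_left _ _) s)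
      · have h1 : v s ≤ o (N s) s := by
          simp only [hN, dif_neg hs]
          exact (hΓ s hs).choose_spec
        refine le_trans h1 (hmono ?_ s)
        exact le_trans (Finset.le_sup (Finset.mem_univ s)) (le_max_right _ _)
    set e : Λ → ℕ := fun s => o m s - v s with he
    have hsum : v + e = o m := by
      funext s
      have h5 : v s ≤ o m s := hle s
      exact Nat.add_sub_cancel' h5
    have hreach : PP.Reach δ (o m) (v' + e) := ⟨p, hsum ▸ PP.shift e hp⟩
    have h3 := hst m _ hreach
    have h4 : (v + e) y = o m y := by rw [hsum]
    simp only [Pi.add_apply] at h3 h4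
    omega
  refine ⟨main, fun v hv => main v ⟨0, fun s hs => ?_⟩⟩
  rw [hv s hs]; exact Nat.zero_le _
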